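/- Let M be a compact metric space, f : M → M a homeomorphism, and p a periodic point of f with the property that there exists η > 0 such that every point x whose negative semitrajectory O₋(x,f) is contained in N(η, O(p,f)) belongs to W^u(p). Let q¹ ∈ W^u(p) and write q¹_k = f^k(q¹). Then for every R > 0 and every ε₀ with 0 < ε₀ < R/2 there exists ε with 0 < ε < ε₀ such that: for every sequence ξ = (x_k)_{k∈ℤ} in M satisfying x_k = q¹_k for all k ≤ 1 and x_k ∉ N(ε₀, O(p,f)) for all k > 1, and every point q² (with q²_k = f^k(q²)) satisfying dist(q¹_1, q²_1) < ε, ξ ⊂ N(ε, O(q²,f)) and O(q²,f) ⊂ N(ε, ξ), one has q² ∈ W^u(p) and dist(q¹_k, q²_k) ≤ R for all k ≤ 1. -/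

import Mathlib

open Filter Metric

noncomputable section

/-- The full orbit `O(p,f) = {f^k p : k ∈ ℤ}` of a point under a bijection. -/
def orbitZ {M : Type*} (f : Equiv.Perm M) (p : M) : Set M :=
  Set.range fun k : ℤ => (f ^ k) p

/-- The unstable set `W^u(p)` of a (periodic) point:
points whose backward iterates approach the backward iterates of some point of `O(p,f)`. -/
def unstableSet {M : Type*} [MetricSpace M] (f : Equiv.Perm M) (p : M) : Set M :=
  {q | ∃ r ∈ orbitZ f p,
    Tendsto (fun k : ℕ => dist ((f ^ (-(k : ℤ))) q) ((f ^ (-(k : ℤ))) r)) atTop (nhds 0)}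

open Filter Metric

namespace OSFU
set_option linter.unusedSectionVars false
variable {M : Type*} [MetricSpace M] [CompactSpace M]

lemma zpow_apply_add (f : Equiv.Perm M) (a b : ℤ) (x : M) :
    (f ^ (a + b)) x = (f ^ a) ((f ^ b) x) := by rw [zpow_add]; rfl

lemma zpow_succ_apply (f : Equiv.Perm M) (n : ℤ) (x : M) :
    (f ^ (n + 1)) x = (f ^ n) (f x) := by rw [zpow_add]; simp

lemma zpow_pred_apply (f : Equiv.Perm M) (n : ℤ) (x : M) :
    (f ^ (n - 1)) x = (f ^ n) (f.symm x) := by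
  rw [sub_eq_add_neg, zpow_add]; simp [Equiv.Perm.inv_def]

lemma cont_zpow (f : Equiv.Perm M) (hf : Continuous (⇑f)) (hf' : Continuous (⇑f.symm)) :
    ∀ k : ℤ, Continuous ⇑(f ^ k) := by
  intro k
  induction k using Int.induction_on with
  | zero => simpa using continuous_id
  | succ n ih =>
      have h : ⇑(f ^ ((n : ℤ) + 1)) = ⇑(f ^ (n : ℤ)) ∘ ⇑f := by
        funext x; exact zpow_succ_apply f n x
      rw [h]; exact ih.comp hf
  | pred n ih =>
      have h : ⇑(f ^ (-(n : ℤ) - 1)) = ⇑(f ^ (-(n : ℤ))) ∘ ⇑f.symm := by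
        funext x; exact zpow_pred_apply f (-n) x
      rw [h]; exact ih.comp hf'

/-- Uniform modulus for a single continuous map. -/
lemma modulus {g : M → M} (hg : Continuous g) {β : ℝ} (hβ : 0 < β) :
    ∃ δ > 0, ∀ a b : M, dist a b < δ → dist (g a) (g b) < β := by
  have := CompactSpace.uniformContinuous_of_continuous (α := M) (β := M) hg
  rw [Metric.uniformContinuous_iff] at this
  exact this β hβ

/-- Window lemma: a single smallness threshold controlling all iterates `f^j`, `|j| ≤ L`. -/
lemma window (f : Equiv.Perm M) (hf : Continuous (⇑f)) (hf' : Continuous (⇑f.symm)) :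
    ∀ (L : ℕ) (β : ℝ), 0 < β → ∃ ε > 0, ε ≤ β ∧
      ∀ a b : M, dist a b < ε → ∀ j : ℤ, |j| ≤ (L : ℤ) →
        dist ((f ^ j) a) ((f ^ j) b) < β := by
  intro L
  induction L with
  | zero =>
      intro β hβ
      refine ⟨β, hβ, le_refl _, fun a b hab j hj => ?_⟩
      have : j = 0 := by
        rcases abs_le.mp hj with ⟨h1, h2⟩; omega
      subst this; simpa using hab
  | succ n ih =>
      intro β hβ
      obtain ⟨ε, hε, hεβ, hwin⟩ := ih β hβ
      obtain ⟨δ₁, hδ₁, h1⟩ := modulus (M := M) hf hε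
      obtain ⟨δ₂, hδ₂, h2⟩ := modulus (M := M) hf' hε
      refine ⟨min ε (min δ₁ δ₂), by positivity, le_trans (min_le_left _ _) hεβ,
        fun a b hab j hj => ?_⟩
      rcases lt_trichotomy j (n + 1 : ℤ) with h | h | h
      · rcases lt_trichotomy j (-(n + 1) : ℤ) with h' | h' | h'
        · rcases abs_le.mp hj with ⟨h1, h2⟩; push_cast at h1 h2 ⊢; omega
        · -- j = -(n+1) : f^j = f^(-n) ∘ f.symm
          subst h'
          have e : (f ^ (-(n + 1) : ℤ)) a = (f ^ (-n : ℤ)) (f.symm a) := by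
            have : (-(n + 1) : ℤ) = (-n : ℤ) - 1 := by ring
            rw [this, zpow_pred_apply]
          have e' : (f ^ (-(n + 1) : ℤ)) b = (f ^ (-n : ℤ)) (f.symm b) := by
            have : (-(n + 1) : ℤ) = (-n : ℤ) - 1 := by ring
            rw [this, zpow_pred_apply]
          rw [e, e']
          have hd : dist (f.symm a) (f.symm b) < ε :=
            h2 _ _ (lt_of_lt_of_le hab (le_trans (min_le_right _ _) (min_le_right _ _)))
          exact hwin _ _ hd (-n) (by simp)
        · -- |j| ≤ n
          have hj' : |j| ≤ (n : ℤ) := by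
            rcases abs_le.mp hj with ⟨hl, hr⟩
            rw [abs_le]; omega
          exact hwin a b (lt_of_lt_of_le hab (min_le_left _ _)) j hj'
      · -- j = n+1
        subst h
        have e : ∀ c : M, (f ^ ((n : ℤ) + 1)) c = (f ^ (n : ℤ)) (f c) := fun c =>
          zpow_succ_apply f n c
        rw [show ((n : ℕ) + 1 : ℤ) = (n : ℤ) + 1 by push_cast; ring]
        rw [e a, e b]
        have hd : dist (f a) (f b) < ε :=
          h1 _ _ (lt_of_lt_of_le hab (le_trans (min_le_right _ _) (min_le_left _ _)))
        exact hwin _ _ hd n (by simp)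
      · rcases abs_le.mp hj with ⟨h1, h2⟩; push_cast at h1 h2 ⊢; omega

lemma mem_orbitZ (f : Equiv.Perm M) (p : M) (k : ℤ) : (f ^ k) p ∈ orbitZ f p := ⟨k, rfl⟩

lemma zpow_mem_orbitZ (f : Equiv.Perm M) {p y : M} (hy : y ∈ orbitZ f p) (j : ℤ) :
    (f ^ j) y ∈ orbitZ f p := by
  obtain ⟨k, rfl⟩ := hy
  exact ⟨j + k, zpow_apply_add f j k p⟩

/-- Orbit of a periodic point is finite. -/
lemma orbitZ_finite (f : Equiv.Perm M) (p : M) (m : ℕ) (hm : 0 < m) (hp : (f ^ m) p = p) :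
    (orbitZ f p).Finite := by
  have hpz : (f ^ ((m : ℕ) : ℤ)) p = p := by rw [zpow_natCast]; exact hp
  have hmul : ∀ t : ℤ, (f ^ ((m : ℤ) * t)) p = p := by
    intro t
    induction t using Int.induction_on with
    | zero => simp
    | succ n ih =>
        have e : (m : ℤ) * (n + 1) = (m : ℤ) + (m : ℤ) * n := by ring
        rw [e, zpow_apply_add, ih, hpz]
    | pred n ih =>
        have e2 : (m : ℤ) * (-(n:ℤ) - 1) = -(m:ℤ) + (m : ℤ) * (-(n:ℤ)) := by ring
        rw [e2, zpow_apply_add, ih]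
        apply (f ^ ((m:ℤ))).injective
        rw [← zpow_apply_add]
        have : (m:ℤ) + -(m:ℤ) = 0 := by ring
        rw [this, zpow_zero, hpz]
        rfl
  have hsub : orbitZ f p ⊆ (fun j : ℤ => (f ^ j) p) '' (Set.Icc 0 ((m : ℤ) - 1)) := by
    rintro _ ⟨k, rfl⟩
    refine ⟨k % (m : ℤ), ⟨Int.emod_nonneg k (by exact_mod_cast hm.ne'), by
      have := Int.emod_lt_of_pos k (by exact_mod_cast hm : (0:ℤ) < m); omega⟩, ?_⟩
    show (f ^ (k % (m:ℤ))) p = (f ^ k) p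
    conv_rhs => rw [← Int.emod_add_mul_ediv k (m:ℤ)]
    rw [zpow_apply_add, hmul]
  exact Set.Finite.subset ((Set.finite_Icc _ _).image _) hsub

/-- Minimal separation of a finite set. -/
lemma separation {P : Set M} (hP : P.Finite) :
    ∃ τ > 0, ∀ a ∈ P, ∀ b ∈ P, dist a b < τ → a = b := by
  classical
  have : ∀ (s : Finset (M × M)), ∃ τ > (0:ℝ), ∀ q ∈ s, q.1 ≠ q.2 → τ ≤ dist q.1 q.2 := by
    intro s
    induction s using Finset.induction_on with
    | empty => exact ⟨1, one_pos, by simp⟩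
    | @insert q s' hq0 ih =>
        obtain ⟨τ, hτ, h⟩ := ih
        by_cases hq : q.1 = q.2
        · exact ⟨τ, hτ, by
            intro q' hq' hne
            rcases Finset.mem_insert.mp hq' with rfl | h'
            · exact absurd hq hne
            · exact h q' h' hne⟩
        · refine ⟨min τ (dist q.1 q.2), lt_min hτ (dist_pos.mpr hq), ?_⟩
          intro q' hq' hne
          rcases Finset.mem_insert.mp hq' with rfl | h'
          · exact min_le_right _ _
          · exact le_trans (min_le_left _ _) (h q' h' hne)
  obtain ⟨τ, hτ, h⟩ := this ((hP.toFinset) ×ˢ (hP.toFinset))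
  refine ⟨τ, hτ, fun a ha b hb hd => ?_⟩
  by_contra hne
  have := h (a, b) (Finset.mem_product.mpr ⟨hP.mem_toFinset.mpr ha, hP.mem_toFinset.mpr hb⟩) hne
  simp at this
  linarith

/-- The unstable set is invariant under all powers of `f`. -/
lemma unstable_shift (f : Equiv.Perm M) (p : M) {y : M} (hy : y ∈ unstableSet f p) (s : ℤ) :
    (f ^ s) y ∈ unstableSet f p := by
  obtain ⟨r, hrP, htd⟩ := hy
  refine ⟨(f ^ s) r, zpow_mem_orbitZ f hrP s, ?_⟩
  have key : ∀ k : ℕ, (s : ℤ) ≤ k →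
      dist ((f ^ (-(k:ℤ))) ((f ^ s) y)) ((f ^ (-(k:ℤ))) ((f ^ s) r))
        = dist ((f ^ (-(((k:ℤ) - s).toNat : ℤ))) y) ((f ^ (-(((k:ℤ) - s).toNat : ℤ))) r) := by
    intro k hk
    have h1 : (-(((k:ℤ) - s).toNat : ℤ)) = -(k:ℤ) + s := by
      rw [Int.toNat_of_nonneg (by omega)]; ring
    rw [h1, zpow_apply_add, zpow_apply_add]
  have hcomp : Tendsto (fun k : ℕ => ((k:ℤ) - s).toNat) atTop atTop := by
    apply tendsto_atTop_atTop.mpr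
    intro b
    refine ⟨b + s.natAbs, fun a ha => ?_⟩
    have h1 : s ≤ (s.natAbs : ℤ) := Int.le_natAbs
    have h2 : (b:ℤ) + (s.natAbs : ℤ) ≤ (a:ℤ) := by exact_mod_cast ha
    omega
  have htd' := htd.comp hcomp
  refine Tendsto.congr' ?_ htd'
  filter_upwards [eventually_ge_atTop s.toNat] with k hk
  have hk' : s ≤ (k:ℤ) := le_trans (Int.self_le_toNat s) (by exact_mod_cast hk)
  exact (key k hk').symm

lemma zpow_succ_apply' (f : Equiv.Perm M) (n : ℤ) (x : M) :
    (f ^ (n + 1)) x = f ((f ^ n) x) := by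
  have : n + 1 = 1 + n := by ring
  rw [this, zpow_apply_add]; simp

lemma zpow_pred_apply' (f : Equiv.Perm M) (n : ℤ) (x : M) :
    (f ^ (n - 1)) x = f.symm ((f ^ n) x) := by
  have : n - 1 = -1 + n := by ring
  rw [this, zpow_apply_add]; simp [Equiv.Perm.inv_def]

lemma tail_bound (f : Equiv.Perm M) {q r : M}
    (htd : Tendsto (fun k : ℕ => dist ((f ^ (-(k : ℤ))) q) ((f ^ (-(k : ℤ))) r)) atTop (nhds 0))
    {δ : ℝ} (hδ : 0 < δ) :
    ∃ N : ℕ, ∀ k : ℤ, k ≤ -(N : ℤ) → dist ((f ^ k) q) ((f ^ k) r) ≤ δ := by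
  obtain ⟨N, hN⟩ := eventually_atTop.mp (htd.eventually (gt_mem_nhds hδ))
  refine ⟨N, fun k hk => ?_⟩
  have hc : (((-k).toNat : ℕ) : ℤ) = -k := Int.toNat_of_nonneg (by omega)
  have hge : N ≤ (-k).toNat := by omega
  have := hN _ hge
  rw [show (-(((-k).toNat : ℕ) : ℤ)) = k by omega] at this
  exact this.le

lemma infDist_pos_of_not_mem {P : Set M} (hP : P.Finite) (hne : P.Nonempty) {x : M}
    (hx : x ∉ P) : 0 < Metric.infDist x P := by
  rcases lt_or_eq_of_le (Metric.infDist_nonneg (s := P) (x := x)) with h | h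
  · exact h
  · exfalso
    apply hx
    rw [← hP.isClosed.closure_eq]
    exact (Metric.mem_closure_iff_infDist_zero hne).mpr h.symm

end OSFU
set_option maxHeartbeats 2000000 in
open OSFU in
/-- Corollary of the Main Lemma: any exact trajectory orbitally shadowing a
pseudotrajectory that follows `O(q¹,f)` (with `q¹ ∈ W^u(p)`) for times `k ≤ 1` and stays
away from `O(p,f)` for times `k > 1` must lie in `W^u(p)` and stay `R`-close to `O(q¹,f)`
at times `k ≤ 1`. -/
theorem orbital_shadowing_forces_unstable_manifold
    {M : Type*} [MetricSpace M] [CompactSpace M]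
    (f : Equiv.Perm M) (hf : Continuous (⇑f)) (hf' : Continuous (⇑f.symm))
    (p : M) (m : ℕ) (hm : 0 < m) (hp : (f ^ m) p = p)
    (η : ℝ) (hη : 0 < η)
    (hloc : ∀ x : M, (∀ k : ℕ, (f ^ (-(k : ℤ))) x ∈ thickening η (orbitZ f p)) →
      x ∈ unstableSet f p)
    (q1 : M) (hq1 : q1 ∈ unstableSet f p)
    (R ε₀ : ℝ) (hR : 0 < R) (hε₀ : 0 < ε₀) (hε₀R : ε₀ < R / 2) :
    ∃ ε : ℝ, 0 < ε ∧ ε < ε₀ ∧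
      ∀ x : ℤ → M,
        (∀ k : ℤ, k ≤ 1 → x k = (f ^ k) q1) →
        (∀ k : ℤ, 1 < k → x k ∉ thickening ε₀ (orbitZ f p)) →
        ∀ q2 : M,
          dist ((f ^ (1 : ℤ)) q1) ((f ^ (1 : ℤ)) q2) < ε →
          (∀ k : ℤ, x k ∈ thickening ε (orbitZ f q2)) →
          orbitZ f q2 ⊆ thickening ε (Set.range x) →
          q2 ∈ unstableSet f p ∧ ∀ k : ℤ, k ≤ 1 → dist ((f ^ k) q1) ((f ^ k) q2) ≤ R := by
  classical
  obtain ⟨r, hrP, hrtd⟩ := hq1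
  have hPfin : (orbitZ f p).Finite := orbitZ_finite f p m hm hp
  have hPne : (orbitZ f p).Nonempty := ⟨p, 0, by simp⟩
  obtain ⟨τ, hτ, hsep⟩ := separation hPfin
  have hrk : ∀ k : ℤ, (f ^ k) r ∈ orbitZ f p := fun k => zpow_mem_orbitZ f hrP k
  -- level-2 scale
  set c₂ : ℝ := min (τ / 3) (min (ε₀ / 4) (η / 4)) with hc₂def
  have hc₂pos : 0 < c₂ := lt_min (by linarith) (lt_min (by linarith) (by linarith))
  have hc₂τ : c₂ ≤ τ / 3 := min_le_left _ _
  have hc₂ε₀ : c₂ ≤ ε₀ / 4 := le_trans (min_le_right _ _) (min_le_left _ _)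
  have hc₂η : c₂ ≤ η / 4 := le_trans (min_le_right _ _) (min_le_right _ _)
  obtain ⟨δf, hδfpos, hmf⟩ := modulus (M := M) hf hc₂pos
  obtain ⟨δfi, hδfipos, hmfi⟩ := modulus (M := M) hf' hc₂pos
  -- level-1 scale
  set c₁ : ℝ := min (min (min η ε₀) (min R τ)) (min δf δfi) / 12 with hc₁def
  have hc₁pos : 0 < c₁ := by
    have : 0 < min (min (min η ε₀) (min R τ)) (min δf δfi) :=
      lt_min (lt_min (lt_min hη hε₀) (lt_min hR hτ)) (lt_min hδfpos hδfipos)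
    linarith
  have hble : ∀ X : ℝ, min (min (min η ε₀) (min R τ)) (min δf δfi) ≤ X →
      c₁ ≤ X / 12 := by intro X hX; rw [hc₁def]; linarith
  have hc₁η : c₁ ≤ η / 12 := hble _ (le_trans (min_le_left _ _)
    (le_trans (min_le_left _ _) (min_le_left _ _)))
  have hc₁ε₀ : c₁ ≤ ε₀ / 12 := hble _ (le_trans (min_le_left _ _)
    (le_trans (min_le_left _ _) (min_le_right _ _)))
  have hc₁R : c₁ ≤ R / 12 := hble _ (le_trans (min_le_left _ _)
    (le_trans (min_le_right _ _) (min_le_left _ _)))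
  have hc₁τ : c₁ ≤ τ / 12 := hble _ (le_trans (min_le_left _ _)
    (le_trans (min_le_right _ _) (min_le_right _ _)))
  have hc₁δf : c₁ ≤ δf / 12 := hble _ (le_trans (min_le_right _ _) (min_le_left _ _))
  have hc₁δfi : c₁ ≤ δfi / 12 := hble _ (le_trans (min_le_right _ _) (min_le_right _ _))
  by_cases hcase : ∀ k : ℤ, k ≤ 1 → Metric.infDist ((f ^ k) q1) (orbitZ f p) ≤ c₁
  · -- ============ CASE LOW ============
    obtain ⟨N₁, hN₁⟩ := tail_bound f hrtd hc₁pos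
    -- labels for q1
    have hlab : ∀ k : ℤ, k ≤ 1 → dist ((f ^ k) q1) ((f ^ k) r) ≤ c₁ := by
      have main : ∀ n : ℕ, ∀ k : ℤ, k = -(N₁ : ℤ) + n → k ≤ 1 →
          dist ((f ^ k) q1) ((f ^ k) r) ≤ c₁ := by
        intro n
        induction n with
        | zero => intro k hk _; exact hN₁ k (by omega)
        | succ n ih =>
            intro k hk hk1
            have hprev := ih (k - 1) (by push_cast at hk ⊢; omega) (by omega)
            have hstep : dist ((f ^ k) q1) ((f ^ k) r) < c₂ := by
              have e1 : (f ^ k) q1 = f ((f ^ (k - 1)) q1) := by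
                rw [← zpow_succ_apply']; norm_num
              have e2 : (f ^ k) r = f ((f ^ (k - 1)) r) := by
                rw [← zpow_succ_apply']; norm_num
              rw [e1, e2]
              exact hmf _ _ (lt_of_le_of_lt hprev (by linarith))
            obtain ⟨w, hwP, hweq⟩ :=
              hPfin.isCompact.exists_infDist_eq_dist hPne ((f ^ k) q1)
            have hwd : dist ((f ^ k) q1) w ≤ c₁ := by rw [← hweq]; exact hcase k hk1
            have hww : w = (f ^ k) r := by
              apply hsep w hwP _ (hrk k)
              calc dist w ((f ^ k) r) ≤ dist w ((f ^ k) q1) + dist ((f ^ k) q1) ((f ^ k) r) :=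
                    dist_triangle _ _ _
                _ < c₁ + c₂ := by rw [dist_comm]; linarith
                _ < τ := by linarith
            rw [← hww]; exact hwd
      intro k hk
      by_cases h : k ≤ -(N₁ : ℤ)
      · exact hN₁ k h
      · exact main (k + N₁).toNat k (by omega) hk
    refine ⟨c₁, hc₁pos, by linarith, ?_⟩
    intro x hx1 hx2 q2 hanch hx4 hx5
    -- the trap, downward from time 1
    have inv : ∀ n : ℕ, dist ((f ^ (1 - (n : ℤ))) q2) ((f ^ (1 - (n : ℤ))) r) ≤ 2 * c₁ := by
      intro n
      induction n with
      | zero =>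
          simp only [Nat.cast_zero, sub_zero]
          calc dist ((f ^ (1:ℤ)) q2) ((f ^ (1:ℤ)) r)
              ≤ dist ((f ^ (1:ℤ)) q2) ((f ^ (1:ℤ)) q1) + dist ((f ^ (1:ℤ)) q1) ((f ^ (1:ℤ)) r) :=
                dist_triangle _ _ _
            _ ≤ 2 * c₁ := by
                rw [dist_comm]
                have := hlab 1 (le_refl _)
                linarith
      | succ n ih =>
          set k : ℤ := 1 - (n : ℤ) with hkdef
          have hcast : 1 - ((n + 1 : ℕ) : ℤ) = k - 1 := by push_cast; ring
          rw [hcast]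
          have hstep : dist ((f ^ (k - 1)) q2) ((f ^ (k - 1)) r) < c₂ := by
            rw [zpow_pred_apply', zpow_pred_apply']
            exact hmfi _ _ (lt_of_le_of_lt ih (by linarith))
          obtain ⟨z, hzr, hz⟩ := mem_thickening_iff.mp (hx5 (mem_orbitZ f q2 (k - 1)))
          obtain ⟨j, rfl⟩ := hzr
          have hj1 : j ≤ 1 := by
            by_contra hj
            push_neg at hj
            refine hx2 j hj (mem_thickening_iff.mpr ⟨(f ^ (k - 1)) r, hrk _, ?_⟩)
            calc dist (x j) ((f ^ (k - 1)) r)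
                ≤ dist (x j) ((f ^ (k - 1)) q2) + dist ((f ^ (k - 1)) q2) ((f ^ (k - 1)) r) :=
                  dist_triangle _ _ _
              _ < c₁ + c₂ := by rw [dist_comm]; linarith
              _ < ε₀ := by linarith
          rw [hx1 j hj1] at hz
          have hjr : dist ((f ^ j) q1) ((f ^ j) r) ≤ c₁ := hlab j hj1
          have heq : (f ^ j) r = (f ^ (k - 1)) r := by
            apply hsep _ (hrk j) _ (hrk (k - 1))
            calc dist ((f ^ j) r) ((f ^ (k - 1)) r)
                ≤ dist ((f ^ j) r) ((f ^ j) q1) + dist ((f ^ j) q1) ((f ^ (k - 1)) q2)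
                  + dist ((f ^ (k - 1)) q2) ((f ^ (k - 1)) r) := dist_triangle4 _ _ _ _
              _ < c₁ + c₁ + c₂ := by
                  have e1 : dist ((f ^ j) r) ((f ^ j) q1)
                      = dist ((f ^ j) q1) ((f ^ j) r) := dist_comm _ _
                  have e2 : dist ((f ^ j) q1) ((f ^ (k - 1)) q2)
                      = dist ((f ^ (k - 1)) q2) ((f ^ j) q1) := dist_comm _ _
                  linarith
              _ < τ := by linarith
          calc dist ((f ^ (k - 1)) q2) ((f ^ (k - 1)) r)
              ≤ dist ((f ^ (k - 1)) q2) ((f ^ j) q1) + dist ((f ^ j) q1) ((f ^ j) r) := by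
                rw [heq] at hjr ⊢
                exact dist_triangle _ _ _
            _ ≤ 2 * c₁ := by linarith
    constructor
    · -- q2 ∈ unstable set
      have h1 : (f ^ (1 : ℤ)) q2 ∈ unstableSet f p := by
        apply hloc
        intro kk
        have e : (f ^ (-(kk : ℤ))) ((f ^ (1 : ℤ)) q2) = (f ^ (1 - (kk : ℤ))) q2 := by
          rw [← zpow_apply_add]; ring_nf
        rw [e, mem_thickening_iff]
        refine ⟨(f ^ (1 - (kk : ℤ))) r, hrk _, ?_⟩
        exact lt_of_le_of_lt (inv kk) (by linarith)
      have h2 := unstable_shift f p h1 (-1)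
      have e : (f ^ (-1 : ℤ)) ((f ^ (1 : ℤ)) q2) = q2 := by
        rw [← zpow_apply_add]; norm_num
      rwa [e] at h2
    · intro k hk
      have h1 : dist ((f ^ k) q1) ((f ^ k) r) ≤ c₁ := hlab k hk
      have h2 : dist ((f ^ k) q2) ((f ^ k) r) ≤ 2 * c₁ := by
        have := inv (1 - k).toNat
        rw [show 1 - (((1 - k).toNat : ℕ) : ℤ) = k by omega] at this
        exact this
      calc dist ((f ^ k) q1) ((f ^ k) q2)
          ≤ dist ((f ^ k) q1) ((f ^ k) r) + dist ((f ^ k) r) ((f ^ k) q2) := dist_triangle _ _ _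
        _ ≤ c₁ + 2 * c₁ := by rw [dist_comm ((f ^ k) r)]; linarith
        _ ≤ R := by linarith
  · -- ============ CASE HIGH ============
    push_neg at hcase
    obtain ⟨istar, ⟨histar1, histar2⟩, histarmax⟩ :=
      Int.exists_greatest_of_bdd
        (P := fun k => k ≤ 1 ∧ c₁ < Metric.infDist ((f ^ k) q1) (orbitZ f p))
        ⟨1, fun z hz => hz.1⟩ (by
          obtain ⟨k, hk1, hk2⟩ := hcase
          exact ⟨k, hk1, hk2⟩)
    -- μ : minimal P-distance among orbit points with index in (istar, 1]
    set img : Finset ℝ :=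
      insert c₁ ((Finset.Icc (istar + 1) 1).image
        (fun i => Metric.infDist ((f ^ i) q1) (orbitZ f p))) with himgdef
    have himgne : img.Nonempty := ⟨c₁, Finset.mem_insert_self _ _⟩
    set μ : ℝ := img.min' himgne with hμdef
    have hμc₁ : μ ≤ c₁ := Finset.min'_le _ _ (Finset.mem_insert_self _ _)
    have hμle : ∀ i : ℤ, istar < i → i ≤ 1 →
        μ ≤ Metric.infDist ((f ^ i) q1) (orbitZ f p) := fun i h1 h2 =>
      Finset.min'_le _ _ (Finset.mem_insert_of_mem
        (Finset.mem_image_of_mem _ (Finset.mem_Icc.mpr ⟨by omega, h2⟩)))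
    have hq1P : ∀ i : ℤ, (f ^ i) q1 ∉ orbitZ f p := by
      intro i hi
      have hmem : (f ^ istar) q1 ∈ orbitZ f p := by
        have h2 := zpow_mem_orbitZ f hi (istar - i)
        rw [← zpow_apply_add, show istar - i + i = istar by ring] at h2
        exact h2
      have := Metric.infDist_zero_of_mem hmem
      linarith [histar2]
    have hμpos : 0 < μ := by
      have hmem := img.min'_mem himgne
      rcases Finset.mem_insert.mp hmem with h | h
      · rw [hμdef, h]; exact hc₁pos
      · obtain ⟨i, _, hieq⟩ := Finset.mem_image.mp h
        rw [hμdef, ← hieq]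
        exact infDist_pos_of_not_mem hPfin hPne (hq1P i)
    -- scales
    set B : ℝ := min (min μ ε₀) (min τ c₁) / 4 with hBdef
    have hBpos : 0 < B := by
      have : 0 < min (min μ ε₀) (min τ c₁) :=
        lt_min (lt_min hμpos hε₀) (lt_min hτ hc₁pos)
      rw [hBdef]; linarith
    have hBble : ∀ X : ℝ, min (min μ ε₀) (min τ c₁) ≤ X → B ≤ X / 4 := by
      intro X hX; rw [hBdef]; linarith
    have hBμ : B ≤ μ / 4 := hBble _ (le_trans (min_le_left _ _) (min_le_left _ _))
    have hBε₀ : B ≤ ε₀ / 4 := hBble _ (le_trans (min_le_left _ _) (min_le_right _ _))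
    have hBτ : B ≤ τ / 4 := hBble _ (le_trans (min_le_right _ _) (min_le_left _ _))
    have hBc₁ : B ≤ c₁ / 4 := hBble _ (le_trans (min_le_right _ _) (min_le_right _ _))
    obtain ⟨δB, hδBpos, hmB⟩ := modulus (M := M) hf' hBpos
    set A : ℝ := min δB B / 4 with hAdef
    have hApos : 0 < A := by
      have : 0 < min δB B := lt_min hδBpos hBpos
      rw [hAdef]; linarith
    have hAδB : A ≤ δB / 4 := by
      have := min_le_left δB B; rw [hAdef]; linarith
    have hAB : A ≤ B / 4 := by
      have := min_le_right δB B; rw [hAdef]; linarith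
    have hA8pos : 0 < A / 8 := by linarith
    obtain ⟨N, hN⟩ := tail_bound f hrtd hA8pos
    obtain ⟨εw, hεwpos, hεwβ, hwin⟩ := window f hf hf' (2 * N + 6) (A / 8) hA8pos
    set ε : ℝ := min εw (min (A / 8) (μ / 8)) with hεdef
    have hεεw : ε ≤ εw := min_le_left _ _
    have hεA : ε ≤ A / 8 := le_trans (min_le_right _ _) (min_le_left _ _)
    have hεμ : ε ≤ μ / 8 := le_trans (min_le_right _ _) (min_le_right _ _)
    have hεpos : 0 < ε := lt_min hεwpos (lt_min hA8pos (by linarith))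
    refine ⟨ε, hεpos, by linarith, ?_⟩
    intro x hx1 hx2 q2 hanch hx4 hx5
    -- window closeness around the anchor
    have hwq : ∀ k : ℤ, 1 - ((2 * N + 6 : ℕ) : ℤ) ≤ k → k ≤ 1 →
        dist ((f ^ k) q1) ((f ^ k) q2) < A / 8 := by
      intro k h1 h2
      have hj : |k - 1| ≤ ((2 * N + 6 : ℕ) : ℤ) := by rw [abs_le]; omega
      have hw := hwin _ _ (lt_of_lt_of_le hanch hεεw) (k - 1) hj
      rw [← zpow_apply_add, ← zpow_apply_add, show k - 1 + 1 = k by ring] at hw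
      exact hw
    -- the main trap, by strong downward induction
    have trap : ∀ n : ℕ, dist ((f ^ (-(N : ℤ) - n)) q2) ((f ^ (-(N : ℤ) - n)) r) ≤ A := by
      intro n
      induction n using Nat.strong_induction_on with
      | _ n ih =>
      set k : ℤ := -(N : ℤ) - n with hkdef
      by_cases hbase : n ≤ N + 4
      · -- base zone: covered by the anchor window and the tail
        have h1 : dist ((f ^ k) q1) ((f ^ k) q2) < A / 8 :=
          hwq k (by push_cast; omega) (by omega)
        have h2 : dist ((f ^ k) q1) ((f ^ k) r) ≤ A / 8 := hN k (by omega)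
        have e1 : dist ((f ^ k) q2) ((f ^ k) q1) = dist ((f ^ k) q1) ((f ^ k) q2) :=
          dist_comm _ _
        calc dist ((f ^ k) q2) ((f ^ k) r)
            ≤ dist ((f ^ k) q2) ((f ^ k) q1) + dist ((f ^ k) q1) ((f ^ k) r) :=
              dist_triangle _ _ _
          _ ≤ A := by linarith
      · push_neg at hbase
        have hprev : dist ((f ^ (k + 1)) q2) ((f ^ (k + 1)) r) ≤ A := by
          have hp' := ih (n - 1) (by omega)
          rw [show -(N : ℤ) - ((n - 1 : ℕ) : ℤ) = k + 1 by
            rw [Nat.cast_sub (by omega : 1 ≤ n)]; omega] at hp'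
          exact hp'
        have hstep : dist ((f ^ k) q2) ((f ^ k) r) < B := by
          have e1 : (f ^ k) q2 = f.symm ((f ^ (k + 1)) q2) := by
            rw [← zpow_pred_apply', show k + 1 - 1 = k by ring]
          have e2 : (f ^ k) r = f.symm ((f ^ (k + 1)) r) := by
            rw [← zpow_pred_apply', show k + 1 - 1 = k by ring]
          rw [e1, e2]
          exact hmB _ _ (lt_of_le_of_lt hprev (by linarith))
        obtain ⟨z, hzr, hz⟩ := mem_thickening_iff.mp (hx5 (mem_orbitZ f q2 k))
        obtain ⟨j, rfl⟩ := hzr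
        have hj1 : j ≤ 1 := by
          by_contra hj
          push_neg at hj
          refine hx2 j hj (mem_thickening_iff.mpr ⟨(f ^ k) r, hrk _, ?_⟩)
          have e1 : dist (x j) ((f ^ k) q2) = dist ((f ^ k) q2) (x j) := dist_comm _ _
          calc dist (x j) ((f ^ k) r)
              ≤ dist (x j) ((f ^ k) q2) + dist ((f ^ k) q2) ((f ^ k) r) := dist_triangle _ _ _
            _ < ε + B := by linarith
            _ < ε₀ := by linarith
        rw [hx1 j hj1] at hz
        by_cases hjN : j ≤ -(N : ℤ)
        · -- snap onto the tail
          have ht : dist ((f ^ j) q1) ((f ^ j) r) ≤ A / 8 := hN j hjN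
          have hsame : (f ^ j) r = (f ^ k) r := by
            apply hsep _ (hrk j) _ (hrk k)
            have e1 : dist ((f ^ j) r) ((f ^ j) q1) = dist ((f ^ j) q1) ((f ^ j) r) :=
              dist_comm _ _
            have e2 : dist ((f ^ j) q1) ((f ^ k) q2) = dist ((f ^ k) q2) ((f ^ j) q1) :=
              dist_comm _ _
            calc dist ((f ^ j) r) ((f ^ k) r)
                ≤ dist ((f ^ j) r) ((f ^ j) q1) + dist ((f ^ j) q1) ((f ^ k) q2)
                  + dist ((f ^ k) q2) ((f ^ k) r) := dist_triangle4 _ _ _ _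
              _ < A / 8 + ε + B := by linarith
              _ < τ := by linarith
          have e2 : dist ((f ^ j) q1) ((f ^ j) r) = dist ((f ^ j) q1) ((f ^ k) r) := by
            rw [hsame]
          calc dist ((f ^ k) q2) ((f ^ k) r)
              ≤ dist ((f ^ k) q2) ((f ^ j) q1) + dist ((f ^ j) q1) ((f ^ k) r) :=
                dist_triangle _ _ _
            _ ≤ A := by rw [← e2]; linarith
        · -- snap onto the strip : impossible
          exfalso
          push_neg at hjN
          have hdj : Metric.infDist ((f ^ j) q1) (orbitZ f p) ≤ ε + B := by
            refine le_trans (Metric.infDist_le_dist_of_mem (hrk k)) ?_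
            have e1 : dist ((f ^ j) q1) ((f ^ k) q2) = dist ((f ^ k) q2) ((f ^ j) q1) :=
              dist_comm _ _
            calc dist ((f ^ j) q1) ((f ^ k) r)
                ≤ dist ((f ^ j) q1) ((f ^ k) q2) + dist ((f ^ k) q2) ((f ^ k) r) :=
                  dist_triangle _ _ _
              _ ≤ ε + B := by linarith
          have hjlt : j < istar := by
            by_contra hge
            push_neg at hge
            rcases eq_or_lt_of_le hge with heq | hlt
            · rw [heq] at histar2; linarith
            · have := hμle j hlt hj1; linarith
          have hjs1 : (1 : ℤ) ≤ istar - j := by omega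
          have hjsN : istar - j ≤ (N : ℤ) := by omega
          have hw2 : dist ((f ^ (istar - j + k)) q2) ((f ^ istar) q1) < A / 8 := by
            have hw := hwin _ _ (lt_of_lt_of_le hz hεεw) (istar - j)
              (by rw [abs_le]; push_cast; omega)
            rw [← zpow_apply_add, ← zpow_apply_add,
              show istar - j + j = istar by ring] at hw
            exact hw
          have hjsn : (istar - j).toNat ≤ n := by omega
          have htq : dist ((f ^ (istar - j + k)) q2) ((f ^ (istar - j + k)) r) ≤ A := by
            have hq := ih (n - (istar - j).toNat) (by omega)
            rw [show -(N : ℤ) - ((n - (istar - j).toNat : ℕ) : ℤ) = istar - j + k by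
              rw [Nat.cast_sub hjsn, Int.toNat_of_nonneg (by omega)]; omega] at hq
            exact hq
          have hfin : Metric.infDist ((f ^ istar) q1) (orbitZ f p) ≤ A / 8 + A := by
            refine le_trans (Metric.infDist_le_dist_of_mem (hrk (istar - j + k))) ?_
            have e1 : dist ((f ^ istar) q1) ((f ^ (istar - j + k)) q2)
                = dist ((f ^ (istar - j + k)) q2) ((f ^ istar) q1) := dist_comm _ _
            calc dist ((f ^ istar) q1) ((f ^ (istar - j + k)) r)
                ≤ dist ((f ^ istar) q1) ((f ^ (istar - j + k)) q2)
                  + dist ((f ^ (istar - j + k)) q2) ((f ^ (istar - j + k)) r) :=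
                  dist_triangle _ _ _
              _ ≤ A / 8 + A := by linarith
          linarith
    constructor
    · -- q2 ∈ unstable set
      have h1 : (f ^ (-(N : ℤ))) q2 ∈ unstableSet f p := by
        apply hloc
        intro kk
        have e : (f ^ (-(kk : ℤ))) ((f ^ (-(N : ℤ))) q2) = (f ^ (-(N : ℤ) - kk)) q2 := by
          rw [← zpow_apply_add]; ring_nf
        rw [e, mem_thickening_iff]
        refine ⟨(f ^ (-(N : ℤ) - kk)) r, hrk _, ?_⟩
        exact lt_of_le_of_lt (trap kk) (by linarith)
      have h2 := unstable_shift f p h1 (N : ℤ)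
      have e : (f ^ (N : ℤ)) ((f ^ (-(N : ℤ))) q2) = q2 := by
        rw [← zpow_apply_add]; simp
      rwa [e] at h2
    · intro k hk
      by_cases hkN : -(N : ℤ) ≤ k
      · have := hwq k (by push_cast; omega) hk
        linarith
      · push_neg at hkN
        have ht : dist ((f ^ k) q2) ((f ^ k) r) ≤ A := by
          have hq := trap (-(N : ℤ) - k).toNat
          rw [show -(N : ℤ) - (((-(N : ℤ) - k).toNat : ℕ) : ℤ) = k by
            rw [Int.toNat_of_nonneg (by omega)]; ring] at hq
          exact hq
        have hq1t : dist ((f ^ k) q1) ((f ^ k) r) ≤ A / 8 := hN k (by omega)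
        have e1 : dist ((f ^ k) r) ((f ^ k) q2) = dist ((f ^ k) q2) ((f ^ k) r) := dist_comm _ _
        calc dist ((f ^ k) q1) ((f ^ k) q2)
            ≤ dist ((f ^ k) q1) ((f ^ k) r) + dist ((f ^ k) r) ((f ^ k) q2) :=
              dist_triangle _ _ _
          _ ≤ A / 8 + A := by linarith
          _ ≤ R := by linarith
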